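/- Let f > 0, γ ≥ 0, B_D > 0, r ≥ 0 be fixed, let N ≥ 2 be a natural number, and let A > 0 satisfy f·γ < A + r. Consider the total equilibrium Loss-Versus-Rebalancing as a function of the adverse selection intensity: L(a) = a·V^eq(a) with V^eq(a) = ((N − 1)/N)·B_D·f/(a + r − f·γ). Then L is differentiable at A with derivative L′(A) = V^eq(A)·(1 − A/(A + r − f·γ)); moreover, if r > f·γ then L′(A) > 0. -/

import Mathlib

/-- The total equilibrium LVR `L(a) = a·((N − 1)/N)·B_D·f/(a + r − f·γ)` is
differentiable at `A` with derivative `V^eq(A)·(1 − A/(A + r − f·γ))`, which is positive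
whenever `r > f·γ`. -/
theorem excess_LVR_derivative
    (f γ B_D r : ℝ) (hf : 0 < f) (hγ : 0 ≤ γ) (hB : 0 < B_D) (hr : 0 ≤ r)
    (N : ℕ) (hN : 2 ≤ N) (A : ℝ) (hA : 0 < A) (hlow : f * γ < A + r) :
    HasDerivAt
      (fun a : ℝ => a * (((N : ℝ) - 1) / (N : ℝ) * B_D * f / (a + r - f * γ)))
      ((((N : ℝ) - 1) / (N : ℝ) * B_D * f / (A + r - f * γ)) *
        (1 - A / (A + r - f * γ))) A ∧
    (f * γ < r →
      0 < (((N : ℝ) - 1) / (N : ℝ) * B_D * f / (A + r - f * γ)) *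
        (1 - A / (A + r - f * γ))) := by
  set C : ℝ := ((N : ℝ) - 1) / (N : ℝ) * B_D * f with hC
  have hD : 0 < A + r - f * γ := by linarith
  have hDne : A + r - f * γ ≠ 0 := ne_of_gt hD
  constructor
  · have hden : HasDerivAt (fun a : ℝ => a + r - f * γ) 1 A := by
      simpa [add_sub_assoc] using ((hasDerivAt_id A).add_const (r - f * γ))
    have hinv : HasDerivAt (fun a : ℝ => C / (a + r - f * γ))
        (-(C * 1) / (A + r - f * γ) ^ 2) A :=
      (hasDerivAt_const A C).div hden hDne |>.congr_deriv (by ring)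
    have := (hasDerivAt_id' A).mul hinv
    refine this.congr_deriv ?_
    field_simp
    ring
  · intro hrg
    have hN1 : (1 : ℝ) ≤ (N : ℝ) - 1 := by
      have : (2 : ℝ) ≤ (N : ℝ) := by exact_mod_cast hN
      linarith
    have hCpos : 0 < C := by
      apply mul_pos (mul_pos (div_pos (by linarith) (by linarith)) hB) hf
    have h1 : 0 < C / (A + r - f * γ) := div_pos hCpos hD
    have h2 : 0 < 1 - A / (A + r - f * γ) := by
      rw [sub_pos, div_lt_one hD]; linarith
    exact mul_pos h1 h2
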